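/- For all α ∈ (0, 1/2] and t ∈ (0, π/2), the function G(t,α) = (1+α)cos((3-2α)t) + (3-α)cos((1-2α)t) − (1-α)²cos(3t) − (1+α)(3-α)cos(t) is strictly positive. -/

import Mathlib

open Real

/-- Huygens-type inequality: `3 t < 2 tan t + sin t` on `(0, π/2)`,
stated multiplied through by `cos t`. -/
lemma huygens_aux (t : ℝ) (ht0 : 0 < t) (ht1 : t < π/2) :
    3*t*Real.cos t < 2*Real.sin t + Real.sin t * Real.cos t := by
  have hC : 0 < Real.cos t := Real.cos_pos_of_mem_Ioo ⟨by linarith [Real.pi_pos], ht1⟩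
  have key : 3*t < 2*Real.tan t + Real.sin t := by
    set f : ℝ → ℝ := fun x => 2*Real.tan x + Real.sin x - 3*x with hf
    have hsub : Set.Ico (0:ℝ) (π/2) ⊆ {x | Real.cos x ≠ 0} := by
      intro x hx
      exact ne_of_gt (Real.cos_pos_of_mem_Ioo ⟨by linarith [Real.pi_pos, hx.1], hx.2⟩)
    have hcont : ContinuousOn f (Set.Ico 0 (π/2)) := by
      apply ContinuousOn.sub
      · exact ((Real.continuousOn_tan.mono hsub).const_smul (2:ℝ)).add
          Real.continuous_sin.continuousOn
      · exact (continuous_const.mul continuous_id).continuousOn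
    have hmono : StrictMonoOn f (Set.Ico 0 (π/2)) := by
      apply strictMonoOn_of_deriv_pos (convex_Ico _ _) hcont
      intro x hx
      rw [interior_Ico] at hx
      have hcx : 0 < Real.cos x := Real.cos_pos_of_mem_Ioo ⟨by linarith [Real.pi_pos, hx.1], hx.2⟩
      have hcx1 : Real.cos x < 1 := by
        have := Real.cos_lt_cos_of_nonneg_of_le_pi le_rfl
          (by linarith [Real.pi_pos, hx.2] : x ≤ π) hx.1
        simpa using this
      have hd : HasDerivAt f (2*(1/Real.cos x^2) + Real.cos x - 3) x := by
        have h1 := (Real.hasDerivAt_tan (ne_of_gt hcx)).const_mul (2:ℝ)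
        have h2 := Real.hasDerivAt_sin x
        have h3 := (hasDerivAt_id x).const_mul (3:ℝ)
        have h4 := (h1.add h2).sub h3
        exact h4.congr_deriv (by ring)
      rw [hd.deriv]
      have hinv : (1/Real.cos x^2) * Real.cos x^2 = 1 := by
        field_simp
      have hfac : 0 < (1 - Real.cos x) * (2 + 2*Real.cos x - Real.cos x^2) := by
        have h1 : 0 < 1 - Real.cos x := by linarith
        have h2 : 0 < 2 + 2*Real.cos x - Real.cos x^2 := by nlinarith
        exact mul_pos h1 h2
      nlinarith [hinv, hfac, mul_pos hcx hcx, sq_nonneg (Real.cos x)]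
    have h0mem : (0:ℝ) ∈ Set.Ico (0:ℝ) (π/2) := ⟨le_refl _, by linarith [Real.pi_pos]⟩
    have htmem : t ∈ Set.Ico (0:ℝ) (π/2) := ⟨le_of_lt ht0, ht1⟩
    have := hmono h0mem htmem ht0
    simp [hf, Real.tan_zero] at this
    linarith
  rw [Real.tan_eq_sin_div_cos] at key
  have h5 : Real.sin t / Real.cos t * Real.cos t = Real.sin t :=
    div_mul_cancel₀ _ (ne_of_gt hC)
  nlinarith [mul_lt_mul_of_pos_right key hC]

/-- The key concavity lemma: `φ(u) = u sin t cos u + 2 u sin t cos t - 3 t cos t sin u`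
is positive for `0 < u < t < π/2`. -/
lemma phi_pos (t : ℝ) (ht0 : 0 < t) (ht1 : t < π/2) (u : ℝ) (hu0 : 0 < u) (hut : u < t) :
    0 < u * Real.sin t * Real.cos u + 2*u*Real.sin t*Real.cos t - 3*t*Real.cos t*Real.sin u := by
  have hC : 0 < Real.cos t := Real.cos_pos_of_mem_Ioo ⟨by linarith [Real.pi_pos], ht1⟩
  have hS : 0 < Real.sin t := Real.sin_pos_of_pos_of_lt_pi ht0 (by linarith [Real.pi_pos])
  set S := Real.sin t with hSdef
  set C := Real.cos t with hCdef
  set φ : ℝ → ℝ := fun x => S * (x * Real.cos x) + 2*S*C*x - 3*t*C*Real.sin x with hφ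
  set g : ℝ → ℝ := fun x => S * (Real.cos x - x*Real.sin x) + 2*S*C - 3*t*C*Real.cos x with hg
  have d1 : ∀ x : ℝ, HasDerivAt φ (g x) x := by
    intro x
    have hxc : HasDerivAt (fun y : ℝ => y * Real.cos y) (Real.cos x - x * Real.sin x) x := by
      simpa [sub_eq_add_neg] using (hasDerivAt_id' x).fun_mul (Real.hasDerivAt_cos x)
    have h1 := hxc.const_mul S
    have h2 := (hasDerivAt_id x).const_mul (2*S*C)
    have h3 := (Real.hasDerivAt_sin x).const_mul (3*t*C)
    have h4 := (h1.add h2).sub h3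
    exact h4.congr_deriv (by simp only [hg, id_eq]; ring)
  have d2 : ∀ x : ℝ, HasDerivAt g (S * (-2*Real.sin x - x*Real.cos x) + 3*t*C*Real.sin x) x := by
    intro x
    have hxs : HasDerivAt (fun y : ℝ => y * Real.sin y) (Real.sin x + x * Real.cos x) x := by
      simpa [mul_comm] using (hasDerivAt_id' x).fun_mul (Real.hasDerivAt_sin x)
    have h1 := ((Real.hasDerivAt_cos x).sub hxs).const_mul S
    have h2 : HasDerivAt (fun _ : ℝ => 2*S*C) 0 x := hasDerivAt_const x _
    have h3 := (Real.hasDerivAt_cos x).const_mul (3*t*C)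
    have h4 := (h1.add h2).sub h3
    exact h4.congr_deriv (by ring)
  have hderiv1 : deriv φ = g := funext fun x => (d1 x).deriv
  have hconc : StrictConcaveOn ℝ (Set.Icc 0 t) φ := by
    apply strictConcaveOn_of_deriv2_neg (convex_Icc _ _)
    · exact (((continuous_const.mul (continuous_id.mul Real.continuous_cos)).add
        (continuous_const.mul continuous_id)).sub
        (continuous_const.mul Real.continuous_sin)).continuousOn
    · intro x hx
      rw [interior_Icc] at hx
      have hx0 : 0 < x := hx.1
      have hxt : x < t := hx.2
      have hd2val : deriv^[2] φ x = S * (-2*Real.sin x - x*Real.cos x) + 3*t*C*Real.sin x := by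
        show deriv (deriv φ) x = _
        rw [hderiv1]
        exact (d2 x).deriv
      rw [hd2val]
      have hsx : 0 < Real.sin x := Real.sin_pos_of_pos_of_lt_pi hx0 (by linarith [Real.pi_pos])
      have hsxlt : Real.sin x < x := Real.sin_lt hx0
      have hcx : 0 < Real.cos x := Real.cos_pos_of_mem_Ioo ⟨by linarith [Real.pi_pos], by linarith⟩
      have hcxgt : C < Real.cos x :=
        Real.cos_lt_cos_of_nonneg_of_le_pi (le_of_lt hx0) (by linarith [Real.pi_pos]) hxt
      have hhuy : 3*t*C < 2*S + S*C := huygens_aux t ht0 ht1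
      have hA : Real.sin x * (S * Real.cos x) < x * (S * Real.cos x) :=
        mul_lt_mul_of_pos_right hsxlt (mul_pos hS hcx)
      have hB : 3*t*C * Real.sin x < (2*S + S*C) * Real.sin x :=
        mul_lt_mul_of_pos_right hhuy hsx
      have hCC : S * Real.sin x * C < S * Real.sin x * Real.cos x :=
        mul_lt_mul_of_pos_left hcxgt (mul_pos hS hsx)
      nlinarith [hA, hB, hCC]
  have h0m : (0:ℝ) ∈ Set.Icc (0:ℝ) t := ⟨le_refl _, ht0.le⟩
  have htm : t ∈ Set.Icc (0:ℝ) t := ⟨ht0.le, le_refl _⟩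
  have hne : (0:ℝ) ≠ t := ne_of_lt ht0
  have ha : 0 < 1 - u/t := by
    rw [sub_pos]
    exact (div_lt_one ht0).mpr hut
  have hb : 0 < u/t := div_pos hu0 ht0
  have hab : (1 - u/t) + u/t = 1 := by ring
  have hlt := hconc.2 h0m htm hne ha hb hab
  simp only [smul_eq_mul] at hlt
  have hφ0 : φ 0 = 0 := by simp [hφ]
  have hφt : φ t = 0 := by
    simp only [hφ]
    rw [← hCdef, ← hSdef]
    ring
  have harg : (1 - u/t)*0 + (u/t)*t = u := by field_simp; ring
  rw [hφ0, hφt, harg] at hlt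
  have hz : (1 - u/t)*0 + u/t*0 = (0:ℝ) := by ring
  rw [hz] at hlt
  have hphiu : 0 < φ u := hlt
  simp only [hφ] at hphiu
  linarith [hphiu]

theorem stmt_2 (α t : ℝ) (hα0 : 0 < α) (hα1 : α ≤ 1/2)
    (ht0 : 0 < t) (ht1 : t < π/2) :
    0 < (1+α)*cos ((3-2*α)*t) + (3-α)*cos ((1-2*α)*t)
      - (1-α)^2*cos (3*t) - (1+α)*(3-α)*cos t := by
  have hC : 0 < Real.cos t := Real.cos_pos_of_mem_Ioo ⟨by linarith [Real.pi_pos], ht1⟩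
  have hu0 : 0 < (1-α)*t := by
    apply mul_pos (by linarith) ht0
  have hut : (1-α)*t < t := by nlinarith [mul_pos hα0 ht0]
  have hphi := phi_pos t ht0 ht1 ((1-α)*t) hu0 hut
  have hs : 0 < Real.sin ((1-α)*t) :=
    Real.sin_pos_of_pos_of_lt_pi hu0 (by linarith [Real.pi_pos])
  have h4 : 0 < t * ((1-α)*Real.sin t*Real.cos ((1-α)*t) + 2*(1-α)*Real.sin t*Real.cos t
      - 3*Real.cos t*Real.sin ((1-α)*t)) := by nlinarith [hphi]
  have hkey : 0 < (1-α)*Real.sin t*Real.cos ((1-α)*t) + 2*(1-α)*Real.sin t*Real.cos t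
      - 3*Real.cos t*Real.sin ((1-α)*t) := by nlinarith [h4, ht0]
  have e1 : (3-2*α)*t = t + 2*((1-α)*t) := by ring
  have e2 : (1-2*α)*t = 2*((1-α)*t) - t := by ring
  have hGF : (1+α)*Real.cos ((3-2*α)*t) + (3-α)*Real.cos ((1-2*α)*t)
      - (1-α)^2*Real.cos (3*t) - (1+α)*(3-α)*Real.cos t
      = 4*((1-α)^2*Real.sin t^2*Real.cos t
        + (1-α)*Real.sin t*Real.sin ((1-α)*t)*Real.cos ((1-α)*t)
        - 2*Real.cos t*Real.sin ((1-α)*t)^2) := by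
    rw [e1, e2, Real.cos_add, Real.cos_sub, Real.cos_two_mul, Real.sin_two_mul,
      Real.cos_three_mul]
    linear_combination (-(4:ℝ)*(1-α)^2*Real.cos t) * Real.sin_sq_add_cos_sq t + ((8:ℝ)*Real.cos t) * Real.sin_sq_add_cos_sq ((1-α)*t)
  rw [hGF]
  nlinarith [mul_pos hs hkey,
    mul_nonneg hC.le (sq_nonneg ((1-α)*Real.sin t - Real.sin ((1-α)*t)))]
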